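/- arXiv:1803.06644 — 9 statements merged into one kernel-verified Lean document; each statement's English description precedes it below -/
import Mathlib

section
/- Let A be a finite set of alternatives and ≿ a complete transitive preference relation on A held by an agent. For any two subsets S, T of A of the same size k, if S ≿^RS T (i.e., there is a bijection f : T β†’ S with f(a) ≿ a for all a ∈ T), then S ≿^DL T, where ≿^DL is the downward lexicographic extension comparing, from the most preferred indifference class downward, the number of committee members in each indifference class. -/
open Finset

variable {A : Type*}

/-- An agent's complete transitive preference over `A` is represented by a rank
function (smaller rank = more preferred); the fibers of `rank` are the
indifference classes `E^1 ≻ E^2 ≻ ⋯`.  `S ≿ᴿˢ T` (responsive extension):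
there is a bijection `f : T → S` with `f a ≿ a` for all `a ∈ T`. -/
def RSge (rank : A → ℕ) (S T : Finset A) : Prop :=
  ∃ f : A → A, Set.BijOn f ↑T ↑S ∧ ∀ a ∈ T, rank (f a) ≤ rank a

/-- Number of members of `S` in the indifference class of rank `l`. -/
def cnt (rank : A → ℕ) (S : Finset A) (l : ℕ) : ℕ :=
  (S.filter fun a => rank a = l).card

/-- Downward lexicographic extension: either all class counts agree, or at the
smallest (most preferred) class where they differ, `S` has more members. -/
def DLge (rank : A → ℕ) (S T : Finset A) : Prop :=
  (∀ l, cnt rank S l = cnt rank T l) ∨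
    ∃ l, cnt rank T l < cnt rank S l ∧ ∀ l' < l, cnt rank S l' = cnt rank T l'

/-- Upward lexicographic extension: either all class counts agree, or at the
largest (least preferred) class where they differ, `S` has fewer members. -/
def ULge (rank : A → ℕ) (S T : Finset A) : Prop :=
  (∀ l, cnt rank S l = cnt rank T l) ∨
    ∃ l, cnt rank S l < cnt rank T l ∧ ∀ l' > l, cnt rank S l' = cnt rank T l'

/-- `best` extension: every maximal (most preferred) element of `S` is weakly
preferred to every maximal element of `T`. -/
def Bge (rank : A → ℕ) (S T : Finset A) : Prop :=
  ∀ s ∈ S, (∀ x ∈ S, rank s ≤ rank x) →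
    ∀ t ∈ T, (∀ x ∈ T, rank t ≤ rank x) → rank s ≤ rank t

/-- `worst` extension: every minimal (least preferred) element of `S` is weakly
preferred to every minimal element of `T`. -/
def Wge (rank : A → ℕ) (S T : Finset A) : Prop :=
  ∀ s ∈ S, (∀ x ∈ S, rank x ≤ rank s) →
    ∀ t ∈ T, (∀ x ∈ T, rank x ≤ rank t) → rank s ≤ rank t

/-- Pareto optimality (efficiency) of a committee `W` of size `k` with respect
to the set extension whose weak relation is `ge`, for the profile `rank` of the
agents in `I`: no size-`k` committee weakly improves for every agent and
strictly improves (weakly better but not weakly worse) for some agent. -/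
def Efficient {I : Type*} (ge : (A → ℕ) → Finset A → Finset A → Prop)
    (rank : I → A → ℕ) (k : ℕ) (W : Finset A) : Prop :=
  ¬ ∃ W' : Finset A, W'.card = k ∧ (∀ i, ge (rank i) W' W) ∧
      ∃ i, ge (rank i) W' W ∧ ¬ ge (rank i) W W'

lemma cntle_eq_sum (rank : A → ℕ) (S : Finset A) (l : ℕ) :
    (S.filter fun a => rank a ≤ l).card = ∑ j ∈ range (l + 1), cnt rank S j := by
  rw [Finset.card_eq_sum_card_fiberwise (f := rank) (t := range (l + 1))
    (fun x hx => by simp only [mem_coe, mem_filter] at hx; simp [Nat.lt_succ_iff, hx.2])]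
  refine Finset.sum_congr rfl fun j hj => ?_
  simp only [mem_range, Nat.lt_succ_iff] at hj
  unfold cnt
  congr 1
  ext a
  simp only [mem_filter]
  constructor
  · rintro ⟨⟨hA, _⟩, h2⟩; exact ⟨hA, h2⟩
  · rintro ⟨hA, h2⟩; exact ⟨⟨hA, h2 ▸ hj⟩, h2⟩

theorem rs_implies_dl [Fintype A] (rank : A → ℕ) (k : ℕ) (S T : Finset A)
    (hS : S.card = k) (hT : T.card = k) (h : RSge rank S T) :
    DLge rank S T := by
  obtain ⟨f, hbij, hle⟩ := h
  have key : ∀ l, (T.filter fun a => rank a ≤ l).card ≤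
      (S.filter fun a => rank a ≤ l).card := by
    intro l
    apply Finset.card_le_card_of_injOn f
    · intro a ha
      simp only [mem_coe, mem_filter] at ha ⊢
      exact ⟨hbij.mapsTo ha.1, le_trans (hle a ha.1) ha.2⟩
    · intro a ha b hb hab
      exact hbij.injOn (by simpa using (Finset.mem_filter.mp ha).1)
        (by simpa using (Finset.mem_filter.mp hb).1) hab
  by_cases hall : ∀ l, cnt rank S l = cnt rank T l
  · exact Or.inl hall
  · push_neg at hall
    have hex : ∃ l, cnt rank S l ≠ cnt rank T l := hall
    right
    refine ⟨Nat.find hex, ?_, fun l' hl' => by_contra fun hne => Nat.find_min hex hl' hne⟩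
    have hlt : ∀ l' < Nat.find hex, cnt rank S l' = cnt rank T l' :=
      fun l' hl' => by_contra fun hne => Nat.find_min hex hl' hne
    have hne := Nat.find_spec hex
    set l := Nat.find hex
    have h1 := key l
    rw [cntle_eq_sum, cntle_eq_sum, Finset.sum_range_succ, Finset.sum_range_succ] at h1
    have heq : ∑ j ∈ range l, cnt rank T j = ∑ j ∈ range l, cnt rank S j :=
      Finset.sum_congr rfl fun j hj => (hlt j (mem_range.mp hj)).symm
    rw [heq] at h1
    have := Nat.le_of_add_le_add_left (by omega : ∑ j ∈ range l, cnt rank S j + cnt rank T l ≤ ∑ j ∈ range l, cnt rank S j + cnt rank S l)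
    omega
end

section
/- Let A be a finite set with a complete transitive preference relation ≿. For any two subsets S, T of A of the same size k, if S ≿^RS T then S ≿^UL T, where ≿^UL is the upward lexicographic extension: S ≻^UL T iff for the largest index l with |S ∩ E^l| β‰ |T ∩ E^l| we have |S ∩ E^l| < |T ∩ E^l|. -/
open Finset

variable {A : Type*}

theorem rs_implies_ul [Fintype A] (rank : A → ℕ) (k : ℕ) (S T : Finset A)
    (hS : S.card = k) (hT : T.card = k) (h : RSge rank S T) :
    ULge rank S T := by
  classical
  obtain ⟨f, hbij, hle⟩ := h
  set g : Finset A → ℕ → ℕ := fun U m => (U.filter fun a => m ≤ rank a).card with hg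
  have key : ∀ m, g S m ≤ g T m := by
    intro m
    have himg : (T.filter fun a => m ≤ rank (f a)).image f
        = S.filter fun a => m ≤ rank a := by
      ext s
      simp only [mem_image, mem_filter]
      constructor
      · rintro ⟨a, ⟨ha, hm⟩, rfl⟩
        exact ⟨hbij.1 ha, hm⟩
      · rintro ⟨hs, hm⟩
        obtain ⟨a, ha, rfl⟩ := hbij.2.2 hs
        exact ⟨a, ⟨ha, hm⟩, rfl⟩
    have hinj : Set.InjOn f ↑(T.filter fun a => m ≤ rank (f a)) := by
      apply hbij.2.1.mono
      intro a ha
      simp only [coe_filter, Set.mem_setOf_eq] at ha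
      exact ha.1
    calc g S m = ((T.filter fun a => m ≤ rank (f a)).image f).card := by rw [himg]
      _ = (T.filter fun a => m ≤ rank (f a)).card := card_image_of_injOn hinj
      _ ≤ g T m := by
          apply card_le_card
          intro a ha
          simp only [mem_filter] at ha ⊢
          exact ⟨ha.1, le_trans ha.2 (hle a ha.1)⟩
  have hsplit : ∀ (U : Finset A) l, cnt rank U l + g U (l + 1) = g U l := by
    intro U l
    rw [cnt, hg]
    rw [← card_union_of_disjoint]
    · congr 1
      ext a
      simp only [mem_union, mem_filter]
      constructor
      · rintro (⟨h1, h2⟩ | ⟨h1, h2⟩) <;> exact ⟨h1, by omega⟩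
      · rintro ⟨h1, h2⟩
        rcases eq_or_lt_of_le h2 with h3 | h3
        · exact Or.inl ⟨h1, h3.symm⟩
        · exact Or.inr ⟨h1, h3⟩
    · rw [Finset.disjoint_left]
      intro a ha hb
      simp only [mem_filter] at ha hb
      omega
  set N : ℕ := Finset.univ.sup rank + 1 with hN
  have hzero : ∀ (U : Finset A) m, N ≤ m → g U m = 0 := by
    intro U m hm
    rw [hg]
    simp only [card_eq_zero, filter_eq_empty_iff]
    intro a _
    have := Finset.le_sup (f := rank) (mem_univ a)
    omega
  by_cases hall : ∀ l, g S l = g T l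
  · left
    intro l
    have h1 := hsplit S l
    have h2 := hsplit T l
    have h3 := hall l
    have h4 := hall (l + 1)
    omega
  · right
    push_neg at hall
    obtain ⟨l0, hl0⟩ := hall
    set D : Finset ℕ := (range N).filter (fun m => g S m ≠ g T m) with hD
    have hne : D.Nonempty := by
      refine ⟨l0, ?_⟩
      simp only [hD, mem_filter, mem_range]
      refine ⟨?_, hl0⟩
      by_contra hc
      push_neg at hc
      rw [hzero S l0 hc, hzero T l0 hc] at hl0
      exact hl0 rfl
    set l := D.max' hne with hl
    have hlD : l ∈ D := D.max'_mem hne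
    have hlne : g S l ≠ g T l := (mem_filter.mp hlD).2
    have heq : ∀ l' > l, g S l' = g T l' := by
      intro l' hl'
      by_cases hc : l' < N
      · by_contra hne'
        have : l' ∈ D := by simp only [hD, mem_filter, mem_range]; exact ⟨hc, hne'⟩
        have := D.le_max' l' this
        omega
      · push_neg at hc
        rw [hzero S l' hc, hzero T l' hc]
    refine ⟨l, ?_, ?_⟩
    · have h1 := hsplit S l
      have h2 := hsplit T l
      have h3 := heq (l + 1) (by omega)
      have h4 := key l
      omega
    · intro l' hl'
      have h1 := hsplit S l'
      have h2 := hsplit T l'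
      have h3 := heq l' hl'
      have h4 := heq (l' + 1) (by omega)
      omega
end

section
/- Let A be a finite set with a complete transitive preference relation ≿ and let S, T be nonempty subsets of A of the same size. If S ≿^UL T then S ≿^W T, where S ≿^W T means every minimal element of S under ≿ is weakly preferred to every minimal element of T under ≿. -/
open Finset

variable {A : Type*}

theorem ul_implies_worst [Fintype A] (rank : A → ℕ) (S T : Finset A)
    (hS : S.Nonempty) (hT : T.Nonempty) (hcard : S.card = T.card)
    (h : ULge rank S T) : Wge rank S T := by
  intro s hs hsmax t ht htmax
  have hScnt : 0 < cnt rank S (rank s) := by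
    simp only [cnt, Finset.card_pos, Finset.filter_nonempty_iff]
    exact ⟨s, hs, rfl⟩
  have key : ∀ l, 0 < cnt rank T l → l ≤ rank t := by
    intro l hl
    simp only [cnt, Finset.card_pos, Finset.filter_nonempty_iff] at hl
    obtain ⟨a, ha, hra⟩ := hl
    exact hra ▸ htmax a ha
  rcases h with heq | ⟨l, hlt, habove⟩
  · exact key _ (heq (rank s) ▸ hScnt)
  · by_cases hsl : rank s ≤ l
    · exact hsl.trans (key l (Nat.lt_of_le_of_lt (Nat.zero_le _) hlt))
    · push_neg at hsl
      exact key _ ((habove _ hsl) ▸ hScnt)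
end

section
/- Let A be a finite set with a complete transitive preference relation ≿, and S, T subsets of A of the same size k. If S ≻^RS T (i.e., S ≿^RS T and not T ≿^RS S), then S ≻^DL T and S ≻^UL T. -/
open Finset

variable {A : Type*}

private lemma cumsum (rank : A → ℕ) (X : Finset A) (m : ℕ) :
    (X.filter fun a => rank a < m).card = ∑ i ∈ Finset.range m, cnt rank X i := by
  classical
  induction m with
  | zero => simp
  | succ m ih =>
    rw [Finset.sum_range_succ, ← ih, cnt, ← Finset.card_union_of_disjoint]
    · congr 1
      rw [← Finset.filter_or]
      apply Finset.filter_congr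
      intro a _
      simp [Nat.lt_succ_iff_lt_or_eq]
      exact Nat.le_iff_lt_or_eq
    · rw [Finset.disjoint_left]
      intro a ha hb
      simp only [Finset.mem_filter] at ha hb
      omega

private lemma rs_cum (rank : A → ℕ) {S T : Finset A} (h : RSge rank S T) (m : ℕ) :
    ∑ i ∈ Finset.range m, cnt rank T i ≤ ∑ i ∈ Finset.range m, cnt rank S i := by
  classical
  obtain ⟨f, ⟨hmap, hinj, hsurj⟩, hle⟩ := h
  rw [← cumsum, ← cumsum]
  apply Finset.card_le_card_of_injOn f
  · intro a ha
    simp only [Finset.mem_coe, Finset.coe_filter, Set.mem_setOf_eq, Finset.mem_filter] at ha ⊢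
    exact ⟨hmap ha.1, lt_of_le_of_lt (hle a ha.1) ha.2⟩
  · intro a ha b hb hab
    exact hinj (by simpa using (Finset.mem_filter.1 ha).1)
      (by simpa using (Finset.mem_filter.1 hb).1) hab

private lemma eq_counts_rs (rank : A → ℕ) (S T : Finset A)
    (hc : ∀ l, cnt rank S l = cnt rank T l) : RSge rank T S := by
  classical
  have e : ∀ l : ℕ, {x // x ∈ S.filter fun a => rank a = l} ≃
      {x // x ∈ T.filter fun a => rank a = l} :=
    fun l => Finset.equivOfCardEq (hc l)
  classical
  let F : ℕ → A → A := fun l a =>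
    if h : a ∈ S.filter (fun x => rank x = l) then ((e l ⟨a, h⟩ : _) : A) else a
  have key : ∀ a ∈ S, (F (rank a) a) ∈ T ∧ rank (F (rank a) a) = rank a := by
    intro a ha
    have hmem : a ∈ S.filter (fun x => rank x = rank a) := Finset.mem_filter.2 ⟨ha, rfl⟩
    have h2 := ((e (rank a)) ⟨a, hmem⟩).2
    rw [Finset.mem_filter] at h2
    have hFa : F (rank a) a = ((e (rank a)) ⟨a, hmem⟩ : A) := dif_pos hmem
    rw [hFa]
    exact ⟨h2.1, h2.2⟩
  refine ⟨fun a => F (rank a) a, ⟨?_, ?_, ?_⟩, ?_⟩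
  · intro a ha
    exact (key a ha).1
  · intro a ha b hb heq0
    have ha' : a ∈ S := ha
    have hb' : b ∈ S := hb
    have heq : F (rank a) a = F (rank b) b := heq0
    have hr : rank a = rank b := by
      have := (key a ha').2
      have h2 := (key b hb').2
      rw [← this, ← h2, heq]
    rw [hr] at heq
    have hma : a ∈ S.filter (fun x => rank x = rank b) := Finset.mem_filter.2 ⟨ha', hr⟩
    have hmb : b ∈ S.filter (fun x => rank x = rank b) := Finset.mem_filter.2 ⟨hb', rfl⟩
    rw [show F (rank b) a = ((e (rank b) ⟨a, hma⟩ : _) : A) from dif_pos hma,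
        show F (rank b) b = ((e (rank b) ⟨b, hmb⟩ : _) : A) from dif_pos hmb] at heq
    have := (e (rank b)).injective (Subtype.coe_injective heq)
    exact congrArg Subtype.val this
  · intro t ht
    have ht' : t ∈ T.filter (fun a => rank a = rank t) := Finset.mem_filter.2 ⟨ht, rfl⟩
    set s' := (e (rank t)).symm ⟨t, ht'⟩ with hs'
    have hsf := s'.2
    rw [Finset.mem_filter] at hsf
    refine ⟨(s' : A), hsf.1, ?_⟩
    show F (rank (s' : A)) (s' : A) = t
    rw [hsf.2]
    have hFs : F (rank t) (s' : A) = ((e (rank t)) ⟨(s' : A), s'.2⟩ : A) := dif_pos s'.2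
    rw [hFs, Subtype.coe_eta, hs', Equiv.apply_symm_apply]
  · intro a ha
    exact le_of_eq (key a ha).2

theorem rs_strict_implies_dl_ul_strict [Fintype A] (rank : A → ℕ) (k : ℕ)
    (S T : Finset A) (hS : S.card = k) (hT : T.card = k)
    (h : RSge rank S T ∧ ¬ RSge rank T S) :
    (DLge rank S T ∧ ¬ DLge rank T S) ∧ (ULge rank S T ∧ ¬ ULge rank T S) := by
  classical
  obtain ⟨h1, h2⟩ := h
  have hne : ¬ ∀ l, cnt rank S l = cnt rank T l := fun hc => h2 (eq_counts_rs rank S T hc)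
  push_neg at hne
  obtain ⟨l₀, hl₀⟩ := hne
  -- DL part
  have hex : ∃ l, cnt rank S l ≠ cnt rank T l := ⟨l₀, hl₀⟩
  set l := Nat.find hex with hl
  have hlspec : cnt rank S l ≠ cnt rank T l := Nat.find_spec hex
  have hlmin : ∀ l' < l, cnt rank S l' = cnt rank T l' := by
    intro l' hl'
    by_contra hcon
    exact absurd hl' (not_lt.2 (Nat.find_le hcon))
  have hcumeq : ∑ i ∈ Finset.range l, cnt rank S i = ∑ i ∈ Finset.range l, cnt rank T i :=
    Finset.sum_congr rfl (fun i hi => hlmin i (Finset.mem_range.1 hi))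
  have hcuml := rs_cum rank h1 (l + 1)
  rw [Finset.sum_range_succ, Finset.sum_range_succ, hcumeq] at hcuml
  have hdl : cnt rank T l < cnt rank S l := by omega
  have hDL : DLge rank S T ∧ ¬ DLge rank T S := by
    constructor
    · exact Or.inr ⟨l, hdl, hlmin⟩
    · rintro (hall | ⟨l', hl', hbelow⟩)
      · exact hl₀ (hall l₀).symm
      · rcases lt_trichotomy l' l with hc | hc | hc
        · have := hlmin l' hc; omega
        · subst hc; omega
        · have := hbelow l hc; omega
  -- UL part
  set M := (Finset.univ.sup rank) + 1 with hM
  have hzero : ∀ (X : Finset A) (m : ℕ), M ≤ m → cnt rank X m = 0 := by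
    intro X m hm
    rw [cnt, Finset.card_eq_zero, Finset.filter_eq_empty_iff]
    intro a _
    have : rank a ≤ Finset.univ.sup rank := Finset.le_sup (Finset.mem_univ a)
    omega
  have htot : ∀ (X : Finset A), ∑ i ∈ Finset.range M, cnt rank X i = X.card := by
    intro X
    rw [← cumsum]
    congr 1
    apply Finset.filter_true_of_mem
    intro a _
    have : rank a ≤ Finset.univ.sup rank := Finset.le_sup (Finset.mem_univ a)
    omega
  have hl₀M : l₀ < M := by
    by_contra hcon
    push_neg at hcon
    rw [hzero S l₀ hcon, hzero T l₀ hcon] at hl₀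
    exact hl₀ rfl
  set D := (Finset.range M).filter (fun m => cnt rank S m ≠ cnt rank T m) with hD
  have hDne : D.Nonempty := ⟨l₀, Finset.mem_filter.2 ⟨Finset.mem_range.2 hl₀M, hl₀⟩⟩
  set u := D.max' hDne with hu
  have huD0 : u ∈ (Finset.range M).filter (fun m => cnt rank S m ≠ cnt rank T m) :=
    D.max'_mem hDne
  have huD : u < M ∧ cnt rank S u ≠ cnt rank T u :=
    ⟨Finset.mem_range.1 (Finset.mem_filter.1 huD0).1, (Finset.mem_filter.1 huD0).2⟩
  have humax : ∀ l' > u, cnt rank S l' = cnt rank T l' := by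
    intro l' hl'
    by_cases hlM : l' < M
    · by_contra hcon
      have : l' ∈ D := Finset.mem_filter.2 ⟨Finset.mem_range.2 hlM, hcon⟩
      exact absurd (Finset.le_max' D l' this) (not_le.2 hl')
    · push_neg at hlM
      rw [hzero S l' hlM, hzero T l' hlM]
  -- sums above u agree
  have hsplit : ∀ (X : Finset A), ∑ i ∈ Finset.range M, cnt rank X i
      = ∑ i ∈ Finset.range (u + 1), cnt rank X i + ∑ i ∈ Finset.Ico (u + 1) M, cnt rank X i := by
    intro X
    rw [Finset.range_eq_Ico,
      ← Finset.sum_Ico_consecutive _ (Nat.zero_le (u + 1)) (by omega : u + 1 ≤ M), ← Finset.range_eq_Ico]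
  have habove : ∑ i ∈ Finset.Ico (u + 1) M, cnt rank S i
      = ∑ i ∈ Finset.Ico (u + 1) M, cnt rank T i :=
    Finset.sum_congr rfl (fun i hi => humax i (Nat.lt_of_succ_le (Finset.mem_Ico.1 hi).1))
  have hcumU : ∑ i ∈ Finset.range (u + 1), cnt rank S i
      = ∑ i ∈ Finset.range (u + 1), cnt rank T i := by
    have hs := hsplit S
    have ht2 := hsplit T
    rw [htot S, hS] at hs
    rw [htot T, hT] at ht2
    omega
  have hcumu := rs_cum rank h1 u
  rw [Finset.sum_range_succ, Finset.sum_range_succ] at hcumU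
  have hul : cnt rank S u < cnt rank T u := by
    have : cnt rank S u ≠ cnt rank T u := huD.2
    omega
  have hUL : ULge rank S T ∧ ¬ ULge rank T S := by
    constructor
    · exact Or.inr ⟨u, hul, humax⟩
    · rintro (hall | ⟨l', hl', habv⟩)
      · exact hl₀ (hall l₀).symm
      · rcases lt_trichotomy l' u with hc | hc | hc
        · have := habv u hc; omega
        · subst hc; omega
        · have := humax l' hc; omega
  exact ⟨hDL, hUL⟩
end

section
/- Fix a profile of complete transitive preferences over a finite set A with |A| β‰₯ k. There exists a committee of size k that is simultaneously B-efficient and DL-efficient. -/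
open Finset

variable {A : Type*}

private lemma sum_digits_lt {B : ℕ} (hB : 0 < B) (n : ℕ) (d : ℕ → ℕ)
    (hd : ∀ j < n, d j < B) :
    ∑ j ∈ Finset.range n, d j * B ^ j < B ^ n := by
  induction n with
  | zero => simpa using hB
  | succ n ih =>
    rw [Finset.sum_range_succ]
    have h1 : ∑ j ∈ Finset.range n, d j * B ^ j < B ^ n :=
      ih fun j hj => hd j (hj.trans (Nat.lt_succ_self n))
    have h2 : d n + 1 ≤ B := hd n (Nat.lt_succ_self n)
    calc ∑ j ∈ Finset.range n, d j * B ^ j + d n * B ^ n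
        < B ^ n + d n * B ^ n := by omega
      _ = (d n + 1) * B ^ n := by ring
      _ ≤ B * B ^ n := Nat.mul_le_mul_right _ h2
      _ = B ^ (n + 1) := by ring

private lemma lex_sum_lt {B n j0 : ℕ} (hB : 0 < B) (d e : ℕ → ℕ)
    (he : ∀ j < j0, e j < B) (hj0 : j0 < n)
    (hhigh : ∀ j, j0 < j → j < n → d j = e j) (hlt : e j0 < d j0) :
    ∑ j ∈ Finset.range n, e j * B ^ j < ∑ j ∈ Finset.range n, d j * B ^ j := by
  have hm : j0 + 1 ≤ n := hj0
  have key : ∑ j ∈ Finset.range (j0 + 1), e j * B ^ j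
      < ∑ j ∈ Finset.range (j0 + 1), d j * B ^ j := by
    rw [Finset.sum_range_succ, Finset.sum_range_succ]
    have h1 : ∑ j ∈ Finset.range j0, e j * B ^ j < B ^ j0 := sum_digits_lt hB j0 e he
    have h2 : (e j0 + 1) * B ^ j0 ≤ d j0 * B ^ j0 :=
      Nat.mul_le_mul_right _ (Nat.succ_le_of_lt hlt)
    rw [Nat.add_mul, Nat.one_mul] at h2
    omega
  rw [← Finset.sum_range_add_sum_Ico (fun j => e j * B ^ j) hm,
    ← Finset.sum_range_add_sum_Ico (fun j => d j * B ^ j) hm]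
  have hhi : ∑ j ∈ Finset.Ico (j0 + 1) n, e j * B ^ j
      = ∑ j ∈ Finset.Ico (j0 + 1) n, d j * B ^ j := by
    refine Finset.sum_congr rfl fun j hj => ?_
    rw [Finset.mem_Ico] at hj
    rw [hhigh j (by omega) hj.2]
  omega

private lemma cnt_pos_iff (rank : A → ℕ) (S : Finset A) (l : ℕ) :
    0 < cnt rank S l ↔ ∃ a ∈ S, rank a = l := by
  simp [cnt, Finset.card_pos, Finset.filter_nonempty_iff]

private lemma cnt_le_card (rank : A → ℕ) (S : Finset A) (l : ℕ) : cnt rank S l ≤ S.card :=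
  Finset.card_filter_le _ _

private lemma inf'_le_inf'_of_DLge {rank : A → ℕ} {S T : Finset A}
    (hS : S.Nonempty) (hT : T.Nonempty) (h : DLge rank S T) :
    S.inf' hS rank ≤ T.inf' hT rank := by
  obtain ⟨t, ht, htv⟩ := Finset.exists_mem_eq_inf' hT rank
  rcases h with heq | ⟨l, hlt, hlow⟩
  · have hpos : 0 < cnt rank S (T.inf' hT rank) := by
      rw [heq]; exact (cnt_pos_iff _ _ _).mpr ⟨t, ht, htv.symm⟩
    obtain ⟨s, hs, hsr⟩ := (cnt_pos_iff _ _ _).mp hpos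
    exact hsr ▸ Finset.inf'_le _ hs
  · have hSl : 0 < cnt rank S l := Nat.lt_of_le_of_lt (Nat.zero_le _) hlt
    obtain ⟨s, hs, hsr⟩ := (cnt_pos_iff _ _ _).mp hSl
    have h1 : S.inf' hS rank ≤ l := hsr ▸ Finset.inf'_le _ hs
    by_cases hc : T.inf' hT rank < l
    · have hpos : 0 < cnt rank S (T.inf' hT rank) := by
        rw [hlow _ hc]; exact (cnt_pos_iff _ _ _).mpr ⟨t, ht, htv.symm⟩
      obtain ⟨s', hs', hsr'⟩ := (cnt_pos_iff _ _ _).mp hpos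
      exact hsr' ▸ Finset.inf'_le _ hs'
    · exact h1.trans (not_lt.mp hc)

private lemma Bge_iff_inf' {rank : A → ℕ} {S T : Finset A} (hS : S.Nonempty) (hT : T.Nonempty) :
    Bge rank S T ↔ S.inf' hS rank ≤ T.inf' hT rank := by
  constructor
  · intro h
    obtain ⟨s, hs, hsv⟩ := Finset.exists_mem_eq_inf' hS rank
    obtain ⟨t, ht, htv⟩ := Finset.exists_mem_eq_inf' hT rank
    rw [hsv, htv]
    exact h s hs (fun x hx => hsv ▸ Finset.inf'_le _ hx) t ht
      (fun x hx => htv ▸ Finset.inf'_le _ hx)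
  · intro h s hs hsmin t ht htmin
    have h1 : rank s = S.inf' hS rank :=
      le_antisymm (Finset.le_inf' _ _ hsmin) (Finset.inf'_le _ hs)
    have h2 : rank t = T.inf' hT rank :=
      le_antisymm (Finset.le_inf' _ _ htmin) (Finset.inf'_le _ ht)
    rw [h1, h2]; exact h

private lemma sup_sub_eq {rank : A → ℕ} {S : Finset A} (hS : S.Nonempty) (L : ℕ) :
    (S.sup fun a => L - rank a) = L - S.inf' hS rank := by
  obtain ⟨s, hs, hsv⟩ := Finset.exists_mem_eq_inf' hS rank
  refine le_antisymm (Finset.sup_le fun a ha => Nat.sub_le_sub_left (Finset.inf'_le _ ha) L) ?_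
  rw [hsv]
  exact Finset.le_sup (f := fun a => L - rank a) hs

/-- Strict lexicographic case of the DL score comparison: if `S` beats `T` at
class `l` and agrees below, then `S`'s DL score is strictly larger. -/
private lemma sDL_strict {rank : A → ℕ} {S T : Finset A} {L B0 : ℕ} (hB : 0 < B0)
    (hT : ∀ l, cnt rank T l < B0)
    (hSL : ∀ l, L ≤ l → cnt rank S l = 0)
    {l : ℕ} (hlt : cnt rank T l < cnt rank S l)
    (hlow : ∀ l' < l, cnt rank S l' = cnt rank T l') :
    ∑ j ∈ Finset.range L, cnt rank T (L - 1 - j) * B0 ^ j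
      < ∑ j ∈ Finset.range L, cnt rank S (L - 1 - j) * B0 ^ j := by
  have hl : l < L := by
    by_contra hcon
    have := hSL l (not_lt.mp hcon)
    omega
  have hrw : L - 1 - (L - 1 - l) = l := by omega
  exact lex_sum_lt (n := L) (j0 := L - 1 - l) hB
    (fun j => cnt rank S (L - 1 - j)) (fun j => cnt rank T (L - 1 - j))
    (fun j _ => hT _) (by omega)
    (fun j hj1 hj2 => hlow (L - 1 - j) (by omega))
    (by show cnt rank T (L - 1 - (L - 1 - l)) < cnt rank S (L - 1 - (L - 1 - l)); rw [hrw]; exact hlt)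

theorem exists_best_and_dl_efficient {I : Type*} [Fintype I] [Fintype A]
    (rank : I → A → ℕ) (k : ℕ) (hk : k ≤ Fintype.card A) :
    ∃ W : Finset A, W.card = k ∧ Efficient Bge rank k W ∧ Efficient DLge rank k W := by
  classical
  rcases Nat.eq_zero_or_pos k with hk0 | hkpos
  · subst hk0
    refine ⟨∅, Finset.card_empty, ?_, ?_⟩
    · rintro ⟨W', hW', -, i, -, hni⟩
      rw [Finset.card_eq_zero] at hW'
      subst hW'
      exact hni fun s hs => absurd hs (Finset.notMem_empty s)
    · rintro ⟨W', hW', -, i, -, hni⟩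
      rw [Finset.card_eq_zero] at hW'
      subst hW'
      exact hni (Or.inl fun l => rfl)
  · set L : ℕ := (Finset.univ.sup fun p : I × A => rank p.1 p.2) + 1 with hLdef
    have hrank : ∀ i a, rank i a < L := fun i a =>
      Nat.lt_succ_of_le (Finset.le_sup (f := fun p : I × A => rank p.1 p.2)
        (Finset.mem_univ (i, a)))
    have hcnt0 : ∀ (i : I) (S : Finset A) (l : ℕ), L ≤ l → cnt (rank i) S l = 0 := by
      intro i S l hl
      refine Finset.card_eq_zero.mpr (Finset.filter_eq_empty_iff.mpr fun a _ => ?_)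
      have := hrank i a
      omega
    set B0 : ℕ := k + 1 with hB0def
    have hB0 : 0 < B0 := Nat.succ_pos k
    set sDL : I → Finset A → ℕ :=
      fun i S => ∑ j ∈ Finset.range L, cnt (rank i) S (L - 1 - j) * B0 ^ j with hsDLdef
    set sB : I → Finset A → ℕ := fun i S => S.sup fun a => L - rank i a with hsBdef
    set C : ℕ := Fintype.card I * B0 ^ L + 1 with hCdef
    set F : Finset A → ℕ := fun S => (∑ i, sB i S) * C + ∑ i, sDL i S with hFdef
    obtain ⟨W0, hW0sub, hW0card⟩ :=
      Finset.exists_subset_card_eq (s := (Finset.univ : Finset A)) (n := k) (by simpa using hk)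
    have hne : (Finset.univ.filter fun S : Finset A => S.card = k).Nonempty :=
      ⟨W0, Finset.mem_filter.mpr ⟨Finset.mem_univ _, hW0card⟩⟩
    obtain ⟨W, hWmem, hWmax⟩ := Finset.exists_max_image _ F hne
    have hWcard : W.card = k := (Finset.mem_filter.mp hWmem).2
    have hWne : W.Nonempty := Finset.card_pos.mp (hWcard ▸ hkpos)
    have hcntlt : ∀ (i : I) (S : Finset A), S.card = k → ∀ l, cnt (rank i) S l < B0 := by
      intro i S hScard l
      exact lt_of_le_of_lt (cnt_le_card _ _ _) (by rw [hScard]; omega)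
    have hsDLbound : ∀ (i : I) (S : Finset A), S.card = k → sDL i S < B0 ^ L := by
      intro i S hScard
      exact sum_digits_lt hB0 L _ fun j _ => hcntlt i S hScard _
    have hCbound : ∀ S : Finset A, S.card = k → ∑ i, sDL i S < C := by
      intro S hScard
      calc ∑ i, sDL i S ≤ ∑ _i : I, (B0 ^ L - 1) :=
            Finset.sum_le_sum fun i _ => Nat.le_pred_of_lt (hsDLbound i S hScard)
        _ = Fintype.card I * (B0 ^ L - 1) := by
            rw [Finset.sum_const, smul_eq_mul, Finset.card_univ]
        _ ≤ Fintype.card I * B0 ^ L := Nat.mul_le_mul_left _ (Nat.sub_le _ _)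
        _ < C := Nat.lt_succ_self _
    have hBweak : ∀ (i : I) (S : Finset A) (hS : S.Nonempty),
        S.inf' hS (rank i) ≤ W.inf' hWne (rank i) → sB i W ≤ sB i S := by
      intro i S hS h
      simp only [hsBdef]
      rw [sup_sub_eq hWne L, sup_sub_eq hS L]
      exact Nat.sub_le_sub_left h L
    refine ⟨W, hWcard, ?_, ?_⟩
    · -- B-efficiency
      rintro ⟨W', hc', hall, i0, -, hni⟩
      have hW'ne : W'.Nonempty := Finset.card_pos.mp (hc' ▸ hkpos)
      have hweak : ∀ i, sB i W ≤ sB i W' :=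
        fun i => hBweak i W' hW'ne ((Bge_iff_inf' hW'ne hWne).mp (hall i))
      have hstrict : sB i0 W < sB i0 W' := by
        have hlt : W'.inf' hW'ne (rank i0) < W.inf' hWne (rank i0) :=
          not_le.mp fun hle => hni ((Bge_iff_inf' hWne hW'ne).mpr hle)
        have hL' : W'.inf' hW'ne (rank i0) < L := by
          obtain ⟨a, ha, hav⟩ := Finset.exists_mem_eq_inf' hW'ne (rank i0)
          rw [hav]; exact hrank i0 a
        simp only [hsBdef]
        rw [sup_sub_eq hWne L, sup_sub_eq hW'ne L]
        omega
      have hsum : ∑ i, sB i W < ∑ i, sB i W' :=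
        Finset.sum_lt_sum (fun i _ => hweak i) ⟨i0, Finset.mem_univ _, hstrict⟩
      have hF : F W < F W' := by
        simp only [hFdef]
        have h1 := hCbound W hWcard
        calc (∑ i, sB i W) * C + ∑ i, sDL i W
            < (∑ i, sB i W) * C + C := by omega
          _ = ((∑ i, sB i W) + 1) * C := by ring
          _ ≤ (∑ i, sB i W') * C := Nat.mul_le_mul_right _ hsum
          _ ≤ (∑ i, sB i W') * C + ∑ i, sDL i W' := Nat.le_add_right _ _
      exact absurd (hWmax W' (Finset.mem_filter.mpr ⟨Finset.mem_univ _, hc'⟩))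
        (not_le.mpr hF)
    · -- DL-efficiency
      rintro ⟨W', hc', hall, i0, hgi0, hni⟩
      have hW'ne : W'.Nonempty := Finset.card_pos.mp (hc' ▸ hkpos)
      have hDLweak : ∀ i, sDL i W ≤ sDL i W' := by
        intro i
        rcases hall i with heq | ⟨l, hlt, hlow⟩
        · simp only [hsDLdef]
          exact le_of_eq (Finset.sum_congr rfl fun j _ => by rw [heq (L - 1 - j)]).symm
        · exact le_of_lt (sDL_strict hB0 (hcntlt i W hWcard) (hcnt0 i W') hlt hlow)
      have hDLstrict : sDL i0 W < sDL i0 W' := by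
        rcases hgi0 with heq | ⟨l, hlt, hlow⟩
        · exact absurd (Or.inl fun l => (heq l).symm) hni
        · exact sDL_strict hB0 (hcntlt i0 W hWcard) (hcnt0 i0 W') hlt hlow
      have hBweakAll : ∀ i, sB i W ≤ sB i W' := fun i =>
        hBweak i W' hW'ne (inf'_le_inf'_of_DLge hW'ne hWne (hall i))
      have hF : F W < F W' := by
        simp only [hFdef]
        have h1 : (∑ i, sB i W) * C ≤ (∑ i, sB i W') * C :=
          Nat.mul_le_mul_right _ (Finset.sum_le_sum fun i _ => hBweakAll i)
        have h2 : ∑ i, sDL i W < ∑ i, sDL i W' :=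
          Finset.sum_lt_sum (fun i _ => hDLweak i) ⟨i0, Finset.mem_univ _, hDLstrict⟩
        omega
      exact absurd (hWmax W' (Finset.mem_filter.mpr ⟨Finset.mem_univ _, hc'⟩))
        (not_le.mpr hF)
end

section
/- Fix a profile of complete transitive preferences over a finite set A with |A| β‰₯ k. There exists a committee of size k that is simultaneously W-efficient and UL-efficient. -/
open Finset

variable {A : Type*}

lemma wge_refl (r : A → ℕ) (S : Finset A) : Wge r S S :=
  fun s hs _ _ _ hmax => hmax s hs

lemma wge_empty_left (r : A → ℕ) (T : Finset A) : Wge r ∅ T :=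
  fun s hs => absurd hs (Finset.notMem_empty s)

lemma wge_empty_right (r : A → ℕ) (S : Finset A) : Wge r S ∅ :=
  fun _ _ _ t ht => absurd ht (Finset.notMem_empty t)

lemma wge_trans (r : A → ℕ) {S T U : Finset A} (hT : T.Nonempty)
    (h1 : Wge r S T) (h2 : Wge r T U) : Wge r S U := by
  intro s hs hsm u hu hum
  obtain ⟨t, ht, htm⟩ := T.exists_max_image r hT
  exact le_trans (h1 s hs hsm t ht htm) (h2 t ht htm u hu hum)

lemma ulge_refl (r : A → ℕ) (S : Finset A) : ULge r S S := Or.inl fun _ => rfl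

lemma cnt_pos {r : A → ℕ} {S : Finset A} {l : ℕ} (h : 0 < cnt r S l) :
    ∃ a ∈ S, r a = l := by
  classical
  obtain ⟨a, ha⟩ := Finset.card_pos.mp h
  exact ⟨a, (Finset.mem_filter.mp ha).1, (Finset.mem_filter.mp ha).2⟩

lemma cnt_pos_of_mem {r : A → ℕ} {S : Finset A} {a : A} (ha : a ∈ S) :
    0 < cnt r S (r a) := by
  classical
  exact Finset.card_pos.mpr ⟨a, Finset.mem_filter.mpr ⟨ha, rfl⟩⟩

lemma ulge_wge (r : A → ℕ) {S T : Finset A} (h : ULge r S T) : Wge r S T := by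
  intro s hs _ t ht htm
  have hSs : 0 < cnt r S (r s) := cnt_pos_of_mem hs
  rcases h with heq | ⟨l, hl, habove⟩
  · obtain ⟨t', ht', ht'e⟩ := cnt_pos (heq (r s) ▸ hSs)
    calc r s = r t' := ht'e.symm
    _ ≤ r t := htm t' ht'
  · by_cases hcase : l < r s
    · obtain ⟨t', ht', ht'e⟩ := cnt_pos ((habove _ hcase) ▸ hSs)
      calc r s = r t' := ht'e.symm
      _ ≤ r t := htm t' ht'
    · obtain ⟨t', ht', ht'e⟩ := cnt_pos (lt_of_le_of_lt (Nat.zero_le _) hl)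
      calc r s ≤ l := not_lt.mp hcase
      _ = r t' := ht'e.symm
      _ ≤ r t := htm t' ht'

lemma ulge_trans (r : A → ℕ) {S T U : Finset A}
    (h1 : ULge r S T) (h2 : ULge r T U) : ULge r S U := by
  rcases h1 with e1 | ⟨l1, hl1, a1⟩ <;> rcases h2 with e2 | ⟨l2, hl2, a2⟩
  · exact Or.inl fun l => (e1 l).trans (e2 l)
  · exact Or.inr ⟨l2, (e1 l2) ▸ hl2, fun l' h => (e1 l').trans (a2 l' h)⟩
  · exact Or.inr ⟨l1, hl1.trans_le (e2 l1).le, fun l' h => (a1 l' h).trans (e2 l')⟩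
  · rcases lt_trichotomy l1 l2 with h | h | h
    · exact Or.inr ⟨l2, (a1 l2 h) ▸ hl2, fun l' h' => (a1 l' (h.trans h')).trans (a2 l' h')⟩
    · subst h
      exact Or.inr ⟨l1, hl1.trans hl2, fun l' h' => (a1 l' h').trans (a2 l' h')⟩
    · exact Or.inr ⟨l1, hl1.trans_le (a2 l1 h).le,
        fun l' h' => (a1 l' h').trans (a2 l' (h.trans h'))⟩

lemma exists_maximal_rel {β : Type*} (s : Finset β) (r : β → β → Prop)
    (hs : s.Nonempty)
    (htrans : ∀ x ∈ s, ∀ y ∈ s, ∀ z ∈ s, r x y → r y z → r x z)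
    (hirr : ∀ x ∈ s, ¬ r x x) :
    ∃ x ∈ s, ∀ y ∈ s, ¬ r y x := by
  classical
  obtain ⟨x, hx, hmax⟩ := s.exists_max_image
    (fun x => (s.filter (fun y => r x y)).card) hs
  refine ⟨x, hx, fun y hy hryx => ?_⟩
  have hsub : s.filter (fun z => r x z) ⊂ s.filter (fun z => r y z) := by
    refine Finset.ssubset_iff_of_subset ?_ |>.mpr ⟨x, ?_, ?_⟩
    · intro z hz
      have hz' := Finset.mem_filter.mp hz
      exact Finset.mem_filter.mpr ⟨hz'.1, htrans y hy x hx z hz'.1 hryx hz'.2⟩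
    · exact Finset.mem_filter.mpr ⟨hx, hryx⟩
    · intro hmem
      exact hirr x hx (Finset.mem_filter.mp hmem).2
  exact absurd (hmax y hy) (not_le.mpr (Finset.card_lt_card hsub))

theorem exists_worst_and_ul_efficient {I : Type*} [Fintype I] [Fintype A]
    (rank : I → A → ℕ) (k : ℕ) (hk : k ≤ Fintype.card A) :
    ∃ W : Finset A, W.card = k ∧ Efficient Wge rank k W ∧ Efficient ULge rank k W := by
  classical
  set C := (Finset.univ : Finset A).powersetCard k with hC
  have hmemC : ∀ X : Finset A, X ∈ C ↔ X.card = k := by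
    intro X
    simp [hC, Finset.mem_powersetCard]
  have hCne : C.Nonempty := by
    obtain ⟨t, ht, htc⟩ := Finset.exists_subset_card_eq (s := (Finset.univ : Finset A))
      (by simpa using hk)
    exact ⟨t, (hmemC t).mpr htc⟩
  -- strict W-Pareto dominance
  set PW : Finset A → Finset A → Prop :=
    fun X Y => (∀ i, Wge (rank i) X Y) ∧ ∃ i, ¬ Wge (rank i) Y X with hPW
  have hPWne : ∀ {X Y : Finset A}, PW X Y → X.Nonempty ∧ Y.Nonempty := by
    rintro X Y ⟨_, i, hi⟩
    constructor
    · rcases X.eq_empty_or_nonempty with h | h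
      · exact absurd (h ▸ wge_empty_right (rank i) Y) hi
      · exact h
    · rcases Y.eq_empty_or_nonempty with h | h
      · exact absurd (h ▸ wge_empty_left (rank i) X) hi
      · exact h
  have hPWtrans : ∀ {X Y Z : Finset A}, PW X Y → PW Y Z → PW X Z := by
    rintro X Y Z hXY hYZ
    have hYne := (hPWne hXY).2
    have hXne := (hPWne hXY).1
    obtain ⟨i, hi⟩ := hYZ.2
    refine ⟨fun j => wge_trans _ hYne (hXY.1 j) (hYZ.1 j), i, fun h => hi ?_⟩
    exact wge_trans _ hXne h (hXY.1 i)
  have hPWirr : ∀ X : Finset A, ¬ PW X X := by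
    rintro X ⟨_, i, hi⟩
    exact hi (wge_refl (rank i) X)
  obtain ⟨W₀, hW₀C, hW₀max⟩ := exists_maximal_rel C PW hCne
    (fun x _ y _ z _ => hPWtrans) (fun x _ => hPWirr x)
  -- committees weakly W-dominating W₀
  set D := C.filter (fun X => ∀ i, Wge (rank i) X W₀) with hD
  have hW₀D : W₀ ∈ D := Finset.mem_filter.mpr ⟨hW₀C, fun i => wge_refl _ _⟩
  set PU : Finset A → Finset A → Prop :=
    fun X Y => (∀ i, ULge (rank i) X Y) ∧ ∃ i, ¬ ULge (rank i) Y X with hPU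
  have hPUtrans : ∀ {X Y Z : Finset A}, PU X Y → PU Y Z → PU X Z := by
    rintro X Y Z hXY hYZ
    obtain ⟨i, hi⟩ := hYZ.2
    refine ⟨fun j => ulge_trans _ (hXY.1 j) (hYZ.1 j), i, fun h => hi ?_⟩
    exact ulge_trans _ h (hXY.1 i)
  have hPUirr : ∀ X : Finset A, ¬ PU X X := by
    rintro X ⟨_, i, hi⟩
    exact hi (ulge_refl (rank i) X)
  obtain ⟨W, hWD, hWmax⟩ := exists_maximal_rel D PU ⟨W₀, hW₀D⟩
    (fun x _ y _ z _ => hPUtrans) (fun x _ => hPUirr x)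
  have hWC : W ∈ C := (Finset.mem_filter.mp hWD).1
  have hWW₀ : ∀ i, Wge (rank i) W W₀ := (Finset.mem_filter.mp hWD).2
  have hWcard : W.card = k := (hmemC W).mp hWC
  have hW₀card : W₀.card = k := (hmemC W₀).mp hW₀C
  refine ⟨W, hWcard, ?_, ?_⟩
  · -- W-efficiency
    rintro ⟨W'', hc, hall, i₀, _, hni⟩
    have hWne : W.Nonempty := by
      rcases W.eq_empty_or_nonempty with h | h
      · exact absurd (h ▸ wge_empty_left (rank i₀) W'') hni
      · exact h
    have hW₀ne : W₀.Nonempty := by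
      rw [← Finset.card_pos, hW₀card, ← hWcard, Finset.card_pos]
      exact hWne
    refine hW₀max W'' ((hmemC W'').mpr hc) ⟨fun i => ?_, i₀, fun h => hni ?_⟩
    · exact wge_trans _ hWne (hall i) (hWW₀ i)
    · exact wge_trans _ hW₀ne (hWW₀ i₀) h
  · -- UL-efficiency
    rintro ⟨W', hc, hall, i₀, _, hni⟩
    have hWne : W.Nonempty := by
      rcases W.eq_empty_or_nonempty with h | h
      · refine absurd (ulge_refl (rank i₀) W) ?_
        have : W' = W := by
          rw [h, ← Finset.card_eq_zero, hc, ← hWcard, h, Finset.card_empty]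
        exact this ▸ hni
      · exact h
    have hW'D : W' ∈ D := by
      refine Finset.mem_filter.mpr ⟨(hmemC W').mpr hc, fun i => ?_⟩
      exact wge_trans _ hWne (ulge_wge (rank i) (hall i)) (hWW₀ i)
    exact hWmax W' hW'D ⟨hall, i₀, hni⟩
end

section
/- Let score : A β†’ ℝ be obtained as score(a) = βˆ‘_{i} s_i(a) where, for each agent i, s_i : A β†’ ℝ is strictly decreasing with respect to ≿_i (a ≻_i b implies s_i(a) > s_i(b), and a ∼_i b implies s_i(a) = s_i(b)). Then any committee W of size k consisting of k alternatives of maximum total score (i.e., score(w) β‰₯ score(v) for all w ∈ W, v βˆ‰ W) is RS-efficient. -/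
open Finset

variable {A : Type*}

section Aux

variable {A : Type*}

lemma rs_sum_eq {rank : A → ℕ} {s : A → ℝ}
    (hindiff : ∀ a b, rank a = rank b → s a = s b)
    {W W' : Finset A} (f : A → A) (hbij : Set.BijOn f ↑W ↑W') :
    ∑ b ∈ W', s b = ∑ a ∈ W, s (f a) := by
  classical
  have himg : W.image f = W' := by
    apply Finset.coe_injective
    rw [Finset.coe_image]; exact hbij.image_eq
  rw [← himg, Finset.sum_image (fun a ha b hb h => hbij.injOn ha hb h)]

lemma rs_term_le {rank : A → ℕ} {s : A → ℝ}
    (hstrict : ∀ a b, rank a < rank b → s b < s a)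
    (hindiff : ∀ a b, rank a = rank b → s a = s b)
    {a b : A} (h : rank b ≤ rank a) : s a ≤ s b := by
  rcases lt_or_eq_of_le h with h | h
  · exact le_of_lt (hstrict _ _ h)
  · exact le_of_eq (hindiff _ _ h.symm)

lemma rs_sum_le {rank : A → ℕ} {s : A → ℝ}
    (hstrict : ∀ a b, rank a < rank b → s b < s a)
    (hindiff : ∀ a b, rank a = rank b → s a = s b)
    {W W' : Finset A} (f : A → A) (hbij : Set.BijOn f ↑W ↑W')
    (hf : ∀ a ∈ W, rank (f a) ≤ rank a) :
    ∑ a ∈ W, s a ≤ ∑ b ∈ W', s b := by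
  rw [rs_sum_eq hindiff f hbij]
  exact Finset.sum_le_sum fun a ha => rs_term_le hstrict hindiff (hf a ha)

/-- In the equality case, the inverse bijection witnesses `RSge rank W W'`. -/
lemma rs_reverse {rank : A → ℕ} {W W' : Finset A} (f : A → A)
    (hbij : Set.BijOn f ↑W ↑W') (hf : ∀ a ∈ W, rank (f a) = rank a) :
    RSge rank W W' := by
  rcases W.eq_empty_or_nonempty with rfl | ⟨a, ha⟩
  · have : W' = ∅ := by
      apply Finset.coe_injective
      have := hbij.image_eq
      simpa using this.symm
    subst this
    exact ⟨id, by simp [Set.BijOn], by simp⟩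
  · haveI : Nonempty A := ⟨a⟩
    refine ⟨Function.invFunOn f ↑W,
      Set.BijOn.symm hbij.invOn_invFunOn.symm hbij, ?_⟩
    intro b hb
    have hmem : Function.invFunOn f ↑W b ∈ (W : Set A) :=
      hbij.surjOn.mapsTo_invFunOn hb
    have heq : f (Function.invFunOn f ↑W b) = b :=
      hbij.invOn_invFunOn.2 hb
    have := hf _ hmem
    rw [heq] at this
    omega

lemma rs_sum_lt {rank : A → ℕ} {s : A → ℝ}
    (hstrict : ∀ a b, rank a < rank b → s b < s a)
    (hindiff : ∀ a b, rank a = rank b → s a = s b)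
    {W W' : Finset A} (hge : RSge rank W' W) (hng : ¬ RSge rank W W') :
    ∑ a ∈ W, s a < ∑ b ∈ W', s b := by
  obtain ⟨f, hbij, hf⟩ := hge
  rw [rs_sum_eq hindiff f hbij]
  by_cases hall : ∀ a ∈ W, rank (f a) = rank a
  · exact absurd (rs_reverse f hbij hall) hng
  · push_neg at hall
    obtain ⟨a0, ha0, hne⟩ := hall
    refine Finset.sum_lt_sum (fun a ha => rs_term_le hstrict hindiff (hf a ha)) ⟨a0, ha0, ?_⟩
    exact hstrict _ _ (lt_of_le_of_ne (hf a0 ha0) hne)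

end Aux

theorem best_score_committee_rs_efficient {I : Type*} [Fintype I] [Fintype A]
    (rank : I → A → ℕ) (s : I → A → ℝ)
    (hstrict : ∀ i a b, rank i a < rank i b → s i b < s i a)
    (hindiff : ∀ i a b, rank i a = rank i b → s i a = s i b)
    (k : ℕ) (W : Finset A) (hW : W.card = k)
    (hmax : ∀ w ∈ W, ∀ v : A, v ∉ W → (∑ i, s i v) ≤ ∑ i, s i w) :
    Efficient RSge rank k W := by
  classical
  rintro ⟨W', hcard, hall, i0, hi0, hni0⟩
  -- total score comparison
  have hlt : ∑ a ∈ W, ∑ i, s i a < ∑ b ∈ W', ∑ i, s i b := by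
    rw [Finset.sum_comm, Finset.sum_comm (s := W')]
    apply Finset.sum_lt_sum
    · intro i _
      obtain ⟨f, hbij, hf⟩ := hall i
      exact rs_sum_le (hstrict i) (hindiff i) f hbij hf
    · exact ⟨i0, Finset.mem_univ i0, rs_sum_lt (hstrict i0) (hindiff i0) hi0 hni0⟩
  -- but by maximality the total score of W' is at most that of W
  have hge : ∑ b ∈ W', ∑ i, s i b ≤ ∑ a ∈ W, ∑ i, s i a := by
    have hsplit : ∀ (S T : Finset A),
        ∑ a ∈ S, ∑ i, s i a = ∑ a ∈ S ∩ T, ∑ i, s i a + ∑ a ∈ S \ T, ∑ i, s i a := by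
      intro S T
      have := Finset.sum_sdiff (f := fun a => ∑ i, s i a)
        (Finset.inter_subset_left (s₁ := S) (s₂ := T))
      rw [Finset.sdiff_inter_self_left] at this
      linarith [this]
    rw [hsplit W' W, hsplit W W', Finset.inter_comm W W']
    gcongr ?_ + ?_
    · rfl
    -- compare the symmetric differences
    have hcards : (W' \ W).card = (W \ W').card := by
      have h1 := Finset.card_inter_add_card_sdiff W' W
      have h2 := Finset.card_inter_add_card_sdiff W W'
      rw [Finset.inter_comm] at h2
      omega
    rcases (W \ W').eq_empty_or_nonempty with he | ⟨w0, hw0⟩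
    · have : W' \ W = ∅ := Finset.card_eq_zero.mp (by rw [hcards, he]; simp)
      simp [this, he]
    · obtain ⟨w1, hw1, hw1min⟩ := Finset.exists_min_image (W \ W') (fun w => ∑ i, s i w)
        ⟨w0, hw0⟩
      calc ∑ b ∈ W' \ W, ∑ i, s i b
          ≤ ∑ _b ∈ W' \ W, ∑ i, s i w1 := by
            apply Finset.sum_le_sum
            intro b hb
            exact hmax w1 (Finset.mem_sdiff.mp hw1).1 b (Finset.mem_sdiff.mp hb).2
        _ = (W \ W').card • (∑ i, s i w1) := by
            rw [Finset.sum_const, hcards]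
        _ ≤ ∑ a ∈ W \ W', ∑ i, s i a := Finset.card_nsmul_le_sum _ _ _ hw1min
  exact absurd hge (not_le.mpr hlt)
end

section
/- Fix a profile of complete transitive preferences and a size-k committee W. For each agent i, let t_i be the index of the least preferred indifference class of i intersecting W, and let B_i = A βˆ– ((βˆͺ_{lβ‰₯t_i} E_i^l) βˆͺ βˆͺ_{jβ‰ i} βˆͺ_{l>t_j} E_j^l). Then W is not W-efficient (i.e., there is a size-k committee that is a Pareto improvement over W under the 'worst' extension) if and only if |B_i| β‰₯ k for some agent i. -/
open Finset

variable {A : Type*}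

lemma wge_iff_sup {rank : A → ℕ} {S T : Finset A} (hS : S.Nonempty) (hT : T.Nonempty) :
    Wge rank S T ↔ S.sup rank ≤ T.sup rank := by
  constructor
  · intro h
    obtain ⟨s, hs, hse⟩ := Finset.exists_mem_eq_sup S hS rank
    obtain ⟨t, ht, hte⟩ := Finset.exists_mem_eq_sup T hT rank
    rw [hse, hte]
    exact h s hs (fun x hx => hse ▸ Finset.le_sup hx) t ht (fun x hx => hte ▸ Finset.le_sup hx)
  · intro h s hs _ t ht htmax
    have h1 : rank s ≤ S.sup rank := Finset.le_sup hs
    have h2 : T.sup rank ≤ rank t := Finset.sup_le htmax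
    omega

theorem worst_efficiency_characterization {I : Type*} [Fintype I] [DecidableEq I]
    [Fintype A] (rank : I → A → ℕ) (k : ℕ) (hk : 0 < k) (W : Finset A)
    (hW : W.card = k) :
    ¬ Efficient Wge rank k W ↔
      ∃ i, k ≤ (Finset.univ.filter fun a : A =>
        rank i a < W.sup (rank i) ∧ ∀ j, j ≠ i → rank j a ≤ W.sup (rank j)).card := by
  have hWne : W.Nonempty := Finset.card_pos.mp (by omega)
  constructor
  · intro h
    rw [Efficient, not_not] at h
    obtain ⟨W', hW'card, hall, i, _, hni⟩ := h
    have hW'ne : W'.Nonempty := Finset.card_pos.mp (by omega)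
    rw [wge_iff_sup hWne hW'ne] at hni
    push_neg at hni
    refine ⟨i, ?_⟩
    have hsub : W' ⊆ Finset.univ.filter fun a : A =>
        rank i a < W.sup (rank i) ∧ ∀ j, j ≠ i → rank j a ≤ W.sup (rank j) := by
      intro a ha
      simp only [Finset.mem_filter, Finset.mem_univ, true_and]
      refine ⟨lt_of_le_of_lt (Finset.le_sup ha) hni, fun j _ => ?_⟩
      exact le_trans (Finset.le_sup ha) ((wge_iff_sup hW'ne hWne).mp (hall j))
    calc k = W'.card := hW'card.symm
      _ ≤ _ := Finset.card_le_card hsub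
  · rintro ⟨i, hB⟩
    obtain ⟨W', hsub, hcard⟩ := Finset.exists_subset_card_eq hB
    have hW'ne : W'.Nonempty := Finset.card_pos.mp (by omega)
    have hmem : ∀ a ∈ W', rank i a < W.sup (rank i) ∧
        ∀ j, j ≠ i → rank j a ≤ W.sup (rank j) := by
      intro a ha
      have := hsub ha
      simpa using this
    have hstrict : W'.sup (rank i) < W.sup (rank i) := by
      obtain ⟨a, ha, hae⟩ := Finset.exists_mem_eq_sup W' hW'ne (rank i)
      rw [hae]; exact (hmem a ha).1
    have hall : ∀ j, Wge (rank j) W' W := by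
      intro j
      rw [wge_iff_sup hW'ne hWne]
      apply Finset.sup_le
      intro a ha
      by_cases hji : j = i
      · subst hji; exact le_of_lt (lt_of_le_of_lt (Finset.le_sup ha) hstrict)
      · exact (hmem a ha).2 j hji
    rw [Efficient, not_not]
    refine ⟨W', hcard, hall, i, hall i, ?_⟩
    rw [wge_iff_sup hWne hW'ne]
    omega
end

section
/- Fix a profile of complete transitive preferences over finite A with |A| β‰₯ k. Serial dictatorship for the worst extension β€” processing agents in a fixed order, where each agent deletes from the current pool A' (initialized to A) as many of her least preferred indifference classes as possible subject to keeping |A'| β‰₯ k, and finally any k alternatives of the remaining pool are selected β€” always outputs a W-efficient committee of size k. -/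
open Finset

variable {A : Type*}

/-- One step of serial dictatorship for the worst extension: the agent with
rank function `r` deletes from the pool `P` as many of her least preferred
indifference classes as possible, subject to keeping at least `k` alternatives:
she keeps exactly the alternatives of rank at most the least threshold `t` such
that at least `k` alternatives of `P` have rank at most `t`. -/
noncomputable def prune (k : ℕ) (r : A → ℕ) (P : Finset A) : Finset A :=
  P.filter fun a => r a ≤ sInf {t : ℕ | k ≤ (P.filter fun b => r b ≤ t).card}

/-- The pool remaining after agents `0, 1, …, n-1` have pruned in order,
starting from all of `A`. -/
noncomputable def finalPool [Fintype A] {n : ℕ} (rank : Fin n → A → ℕ) (k : ℕ) :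
    Finset A :=
  (List.finRange n).foldl (fun P i => prune k (rank i) P) Finset.univ

/-- Pool after the first `j` agents have pruned. -/
noncomputable def pools [Fintype A] {n : ℕ} (rank : Fin n → A → ℕ) (k : ℕ) (j : ℕ) :
    Finset A :=
  ((List.finRange n).take j).foldl (fun P i => prune k (rank i) P) Finset.univ

lemma foldl_prune_subset {n : ℕ} (rank : Fin n → A → ℕ) (k : ℕ)
    (l : List (Fin n)) (P : Finset A) :
    l.foldl (fun P i => prune k (rank i) P) P ⊆ P := by
  induction l generalizing P with
  | nil => simp
  | cons i l ih =>
    simp only [List.foldl_cons]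
    exact (ih _).trans (Finset.filter_subset _ _)

lemma pools_succ [Fintype A] {n : ℕ} (rank : Fin n → A → ℕ) (k : ℕ) {j : ℕ}
    (hj : j < n) :
    pools rank k (j + 1) = prune k (rank ⟨j, hj⟩) (pools rank k j) := by
  unfold pools
  rw [List.take_succ, List.foldl_append]
  have : (List.finRange n)[j]? = some ⟨j, hj⟩ := by
    rw [List.getElem?_eq_getElem (by simpa using hj)]
    simp
  rw [this]
  simp

lemma finalPool_subset_pools [Fintype A] {n : ℕ} (rank : Fin n → A → ℕ) (k : ℕ)
    (j : ℕ) : finalPool rank k ⊆ pools rank k j := by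
  have h : finalPool rank k =
      ((List.finRange n).drop j).foldl (fun P i => prune k (rank i) P)
        (pools rank k j) := by
    rw [finalPool, pools, ← List.foldl_append, List.take_append_drop]
  rw [h]
  exact foldl_prune_subset rank k _ _

theorem serial_dictatorship_worst_efficient [Fintype A] {n : ℕ}
    (rank : Fin n → A → ℕ) (k : ℕ) (hk : k ≤ Fintype.card A)
    (W : Finset A) (hWsub : W ⊆ finalPool rank k) (hW : W.card = k) :
    Efficient Wge rank k W := by
  rintro ⟨W', hW'card, hall, i, -, hstrict⟩
  -- if W is empty, Wge rank W W' holds vacuously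
  rcases Finset.eq_empty_or_nonempty W with hWe | hWne
  · exact hstrict fun s hs _ => absurd hs (by simp [hWe])
  have hkpos : 0 < k := hW ▸ Finset.card_pos.mpr hWne
  have hW'ne : W'.Nonempty := Finset.card_pos.mp (hW'card ▸ hkpos)
  unfold Wge at hstrict
  push_neg at hstrict
  obtain ⟨s, hsW, hsmax, t, htW', htmax, hlt⟩ := hstrict
  -- W' is contained in every intermediate pool up to agent i
  have key : ∀ j : ℕ, j ≤ (i : ℕ) → W' ⊆ pools rank k j := by
    intro j
    induction j with
    | zero => intro _; simp [pools]
    | succ j ih =>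
      intro hji
      have hjn : j < n := lt_of_lt_of_le (Nat.lt_of_succ_le hji) (le_of_lt i.isLt)
      set jf : Fin n := ⟨j, hjn⟩ with hjf
      have hsub : W' ⊆ pools rank k j := ih (le_of_lt (Nat.lt_of_succ_le hji))
      rw [pools_succ rank k hjn]
      obtain ⟨s', hs'W', hs'max⟩ := W'.exists_max_image (rank jf) hW'ne
      obtain ⟨sW, hsWW, hsWmax⟩ := W.exists_max_image (rank jf) hWne
      have h1 : rank jf s' ≤ rank jf sW := hall jf s' hs'W' hs'max sW hsWW hsWmax
      have h2 : sW ∈ pools rank k (j + 1) :=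
        finalPool_subset_pools rank k (j + 1) (hWsub hsWW)
      rw [pools_succ rank k hjn, prune, Finset.mem_filter] at h2
      intro a ha
      rw [prune, Finset.mem_filter]
      exact ⟨hsub ha, le_trans (le_trans (hs'max a ha) h1) h2.2⟩
  have hW'sub : W' ⊆ pools rank k i := key i le_rfl
  -- s ∈ W lies in the pool after agent i pruned, so its rank is ≤ the threshold
  have hs' : s ∈ pools rank k ((i : ℕ) + 1) :=
    finalPool_subset_pools rank k ((i : ℕ) + 1) (hWsub hsW)
  rw [pools_succ rank k i.isLt, prune, Finset.mem_filter] at hs'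
  have hieq : (⟨(i : ℕ), i.isLt⟩ : Fin n) = i := Fin.ext rfl
  rw [hieq] at hs'
  -- W' fits below rank i t, so the threshold is ≤ rank i t < rank i s
  have hsub2 : W' ⊆ (pools rank k i).filter fun b => rank i b ≤ rank i t := by
    intro a ha
    exact Finset.mem_filter.mpr ⟨hW'sub ha, htmax a ha⟩
  have hcard : k ≤ ((pools rank k i).filter fun b => rank i b ≤ rank i t).card :=
    hW'card.symm.le.trans (Finset.card_le_card hsub2)
  have hinf : sInf {t' : ℕ | k ≤ ((pools rank k i).filter fun b => rank i b ≤ t').card}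
      ≤ rank i t := Nat.sInf_le hcard
  exact absurd (le_trans hs'.2 hinf) (not_le.mpr hlt)
end
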